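/- For the isotropic (all arguments equal) case, the coefficient R^n(m,m,m) as a polynomial in x,y,z equals (m/(n+m)) S^n(n+m, n+m, n+m) for all n \ge 0 and m \ge 1; that is, 4 S^n(n+m,n+m,n+m) - S^n(n+m+1,n+m,n+m) - S^n(n+m,n+m+1,n+m) - S^n(n+m,n+m,n+m+1) = (m/(n+m)) S^n(n+m,n+m,n+m). -/
import Mathlib


/-- `C(k+N-1, N-1)` with the binomial-series convention for `N = 0`. -/
def Scoef (N k : ℕ) : ℕ := (k + N - 1).choose k

/-- `S^n(N_x,N_y,N_z)` as a polynomial in the indeterminates `x = X 0`, `y = X 1`,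
`z = X 2` over `ℚ`. -/
noncomputable def Spoly (n Nx Ny Nz : ℕ) : MvPolynomial (Fin 3) ℚ :=
  ∑ a ∈ Finset.range (n + 1), ∑ b ∈ Finset.range (n + 1 - a),
    (Scoef Nx a : MvPolynomial (Fin 3) ℚ) * (Scoef Ny b : MvPolynomial (Fin 3) ℚ) *
      (Scoef Nz (n - a - b) : MvPolynomial (Fin 3) ℚ) *
      MvPolynomial.X 0 ^ a * MvPolynomial.X 1 ^ b * MvPolynomial.X 2 ^ (n - a - b)

lemma scoef_nat (M k : ℕ) :
    Scoef (M + 2) k * (M + 1) = Scoef (M + 1) k * (k + M + 1) := by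
  have h1 : Scoef (M + 2) k = (k + M + 1).choose k := by unfold Scoef; congr 1
  have h2 : Scoef (M + 1) k = (k + M).choose k := by unfold Scoef; congr 1
  have hs : (k + M + 1) * (k + M).choose M = (k + M + 1).choose (M + 1) * (M + 1) :=
    Nat.add_one_mul_choose_eq (k + M) M
  have c1 : (k + M).choose M = (k + M).choose k := by
    rw [← Nat.choose_symm (Nat.le_add_right k M)]; congr 1; omega
  have c2 : (k + M + 1).choose (M + 1) = (k + M + 1).choose k := by
    rw [← Nat.choose_symm (by omega : k ≤ k + M + 1)]; congr 1; omega
  rw [h1, h2, ← c2, ← hs, c1, Nat.mul_comm]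

lemma scoef_succ (N k : ℕ) (hN : 1 ≤ N) :
    ((Scoef (N + 1) k : ℕ) : MvPolynomial (Fin 3) ℚ)
      = MvPolynomial.C (((k : ℚ) + N) / N) * (Scoef N k : MvPolynomial (Fin 3) ℚ) := by
  obtain ⟨M, rfl⟩ := Nat.exists_eq_add_of_le hN
  have h := scoef_nat M k
  have hq : (Scoef (M + 2) k : ℚ) * (M + 1) = (Scoef (M + 1) k : ℚ) * (k + M + 1) := by
    exact_mod_cast congrArg (Nat.cast : ℕ → ℚ) h
  have hM : ((M : ℚ) + 1) ≠ 0 := by positivity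
  have key : (Scoef (1 + M + 1) k : ℚ)
      = ((k : ℚ) + (1 + M)) / (1 + M) * (Scoef (1 + M) k : ℚ) := by
    have e1 : 1 + M = M + 1 := by omega
    rw [e1]
    field_simp
    push_cast at hq ⊢
    linarith [hq]
  rw [show ((Scoef (1 + M + 1) k : ℕ) : MvPolynomial (Fin 3) ℚ)
      = MvPolynomial.C ((Scoef (1 + M + 1) k : ℚ)) by simp,
    show ((Scoef (1 + M) k : ℕ) : MvPolynomial (Fin 3) ℚ)
      = MvPolynomial.C ((Scoef (1 + M) k : ℚ)) by simp,
    key, map_mul]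
  push_cast
  ring

/-- Isotropic case: for `n ≥ 0` and `m ≥ 1`,
`4 S^n(n+m,n+m,n+m) - S^n(n+m+1,n+m,n+m) - S^n(n+m,n+m+1,n+m) - S^n(n+m,n+m,n+m+1)
= (m/(n+m)) S^n(n+m,n+m,n+m)`. -/
theorem stmt13 (n m : ℕ) (hm : 1 ≤ m) :
    4 * Spoly n (n + m) (n + m) (n + m)
      - Spoly n (n + m + 1) (n + m) (n + m)
      - Spoly n (n + m) (n + m + 1) (n + m)
      - Spoly n (n + m) (n + m) (n + m + 1) =
    MvPolynomial.C ((m : ℚ) / (n + m)) * Spoly n (n + m) (n + m) (n + m) := by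
  have hN : 1 ≤ n + m := by omega
  have hNq : ((n : ℚ) + m) ≠ 0 := by positivity
  simp only [Spoly, Finset.mul_sum, ← Finset.sum_sub_distrib]
  refine Finset.sum_congr rfl fun a ha => ?_
  refine Finset.sum_congr rfl fun b hb => ?_
  have hab : a + b ≤ n := by
    simp only [Finset.mem_range] at ha hb; omega
  rw [scoef_succ _ a hN, scoef_succ _ b hN, scoef_succ _ (n - a - b) hN]
  have hc : ((n - a - b : ℕ) : ℚ) = (n : ℚ) - a - b := by
    rw [Nat.cast_sub (by omega : b ≤ n - a), Nat.cast_sub (by omega : a ≤ n)]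
  have hscalar : (4 : MvPolynomial (Fin 3) ℚ)
      - MvPolynomial.C (((a : ℚ) + (n + m : ℕ)) / (n + m : ℕ))
      - MvPolynomial.C (((b : ℚ) + (n + m : ℕ)) / (n + m : ℕ))
      - MvPolynomial.C ((((n - a - b : ℕ) : ℚ) + (n + m : ℕ)) / (n + m : ℕ))
      = MvPolynomial.C ((m : ℚ) / (n + m)) := by
    rw [show (4 : MvPolynomial (Fin 3) ℚ) = MvPolynomial.C 4 from (map_ofNat MvPolynomial.C 4).symm,
      ← map_sub, ← map_sub, ← map_sub]
    congr 1
    rw [hc]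
    push_cast
    field_simp
    ring
  linear_combination hscalar *
    ((Scoef (n + m) a : MvPolynomial (Fin 3) ℚ) * (Scoef (n + m) b : MvPolynomial (Fin 3) ℚ) *
      (Scoef (n + m) (n - a - b) : MvPolynomial (Fin 3) ℚ) *
      MvPolynomial.X 0 ^ a * MvPolynomial.X 1 ^ b * MvPolynomial.X 2 ^ (n - a - b))
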